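/- Let φ₁,…,φₙ ∈ L²(ℝ³;ℂ), let h, k : ℝ³ → ℂ be bounded and measurable, and define the n×n matrices M_{αβ} = ∫ conj(φ_α(x)) φ_β(x) |h(x)|² dx and K_{αβ} = ∫ conj(φ_α(x)) φ_β(x) |k(x)|² dx. Assume M is invertible. Then Σ_{i=1}^n ∫_{(ℝ³)ⁿ} (1/n!) |det[φ_α(x_j)]_{α,j}|² · ( ∏_{j≠i} |h(x_j)|² ) · |k(x_i)|² dx₁⋯dxₙ = (det M) · Tr( K M^{−1} ). -/

import Mathlib

noncomputable section

open MeasureTheory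
open scoped BigOperators ENNReal

abbrev E3 := EuclideanSpace ℝ (Fin 3)

lemma perm_sum_det (n : ℕ) (M K : Matrix (Fin n) (Fin n) ℂ) (i : Fin n) :
    ∑ σ : Equiv.Perm (Fin n), ∑ τ : Equiv.Perm (Fin n),
      (((Equiv.Perm.sign σ : ℤ) : ℂ) * ((Equiv.Perm.sign τ : ℤ) : ℂ)) *
        ∏ j, (if j = i then K else M) (σ j) (τ j)
    = ∑ τ : Equiv.Perm (Fin n), (M.updateCol (τ i) (fun α => K α (τ i))).det := by
  rw [Finset.sum_comm]
  refine Finset.sum_congr rfl fun τ _ => ?_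
  have hsq : ((Equiv.Perm.sign τ : ℤ) : ℂ) * ((Equiv.Perm.sign τ : ℤ) : ℂ) = 1 := by
    rcases Int.units_eq_one_or (Equiv.Perm.sign τ) with h | h <;> simp [h]
  calc ∑ σ : Equiv.Perm (Fin n),
        (((Equiv.Perm.sign σ : ℤ) : ℂ) * ((Equiv.Perm.sign τ : ℤ) : ℂ)) *
          ∏ j, (if j = i then K else M) (σ j) (τ j)
      = ∑ ρ : Equiv.Perm (Fin n), ((Equiv.Perm.sign ρ : ℤ) : ℂ) *
          ((((Equiv.Perm.sign τ : ℤ) : ℂ)) * (((Equiv.Perm.sign τ : ℤ) : ℂ))) *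
          ∏ l, (if τ.symm l = i then K else M) (ρ l) l := by
        refine Fintype.sum_equiv (Equiv.mulRight τ⁻¹) _ _ fun σ => ?_
        have h1 : ∏ j, (if j = i then K else M) (σ j) (τ j)
            = ∏ l, (if τ.symm l = i then K else M) ((σ * τ⁻¹) l) l := by
          rw [← Equiv.prod_comp τ
            (fun l => (if τ.symm l = i then K else M) ((σ * τ⁻¹) l) l)]
          simp [Equiv.Perm.mul_apply]
        rw [h1]
        simp only [Equiv.coe_mulRight, Equiv.Perm.sign_mul, Equiv.Perm.sign_inv]
        push_cast
        have h2 : ((Equiv.Perm.sign τ : ℤ) : ℂ) ^ 3 = ((Equiv.Perm.sign τ : ℤ) : ℂ) := by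
          rw [pow_succ, pow_two, hsq, one_mul]
        ring_nf
        rw [h2]
    _ = (M.updateCol (τ i) (fun α => K α (τ i))).det := by
        simp only [hsq, mul_one]
        rw [Matrix.det_apply']
        refine Finset.sum_congr rfl fun ρ _ => ?_
        congr 1
        refine Finset.prod_congr rfl fun l _ => ?_
        rw [Matrix.updateCol_apply]
        by_cases hl : l = τ i
        · have : τ.symm l = i := by rw [hl]; simp
          simp [hl, this]
        · have : ¬ τ.symm l = i := by
            rw [Equiv.symm_apply_eq]; exact fun hh => hl hh
          simp [hl, this]

lemma sum_updateColumn_det (n : ℕ) (M K : Matrix (Fin n) (Fin n) ℂ) :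
    ∑ c : Fin n, (M.updateCol c (fun α => K α c)).det
      = (M.adjugate * K).trace := by
  rw [Matrix.trace]
  refine Finset.sum_congr rfl fun c _ => ?_
  rw [← Matrix.cramer_apply, Matrix.cramer_eq_adjugate_mulVec]
  simp [Matrix.mulVec, Matrix.diag, Matrix.mul_apply, dotProduct]

theorem slater_sum_eq_det_trace
    (n : ℕ) (φ : Fin n → E3 → ℂ)
    (hφ : ∀ α, MemLp (φ α) 2 (volume : Measure E3))
    (h k : E3 → ℂ) (hmeas : Measurable h) (kmeas : Measurable k)
    (hbdd : ∃ B, ∀ x, ‖h x‖ ≤ B) (kbdd : ∃ B, ∀ x, ‖k x‖ ≤ B)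
    (M K : Matrix (Fin n) (Fin n) ℂ)
    (hM : ∀ α β, M α β =
      ∫ x : E3, (starRingEnd ℂ) (φ α x) * φ β x * ((‖h x‖ ^ 2 : ℝ) : ℂ))
    (hK : ∀ α β, K α β =
      ∫ x : E3, (starRingEnd ℂ) (φ α x) * φ β x * ((‖k x‖ ^ 2 : ℝ) : ℂ))
    (hMinv : IsUnit M.det) :
    ((∑ i : Fin n, ∫ X : Fin n → E3,
        (1 / (Nat.factorial n : ℝ)) *
          ‖Matrix.det (Matrix.of fun α j => φ α (X j))‖ ^ 2 *
          (∏ j ∈ Finset.univ.erase i, ‖h (X j)‖ ^ 2) * ‖k (X i)‖ ^ 2 : ℝ) : ℂ)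
      = M.det * (K * M⁻¹).trace := by
  classical
  obtain ⟨B, hB⟩ := hbdd
  obtain ⟨C, hC⟩ := kbdd
  set W : Fin n → Fin n → E3 → ℂ :=
    fun i j x => if j = i then ((‖k x‖ : ℂ)) ^ 2 else ((‖h x‖ : ℂ)) ^ 2 with hWdef
  -- integrability of the elementary factors
  have hmul : ∀ α β, Integrable (fun x => (starRingEnd ℂ) (φ α x) * φ β x)
      (volume : Measure E3) := by
    intro α β
    have hconj : MemLp (fun x => (starRingEnd ℂ) (φ α x)) 2 (volume : Measure E3) := by
      refine (hφ α).of_le ?_ ?_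
      · exact continuous_star.comp_aestronglyMeasurable (hφ α).1
      · filter_upwards with x
        simp
    have h12 : (1 : ℝ≥0∞) / 1 = 1 / 2 + 1 / 2 := by
      rw [ENNReal.div_add_div_same, one_add_one_eq_two,
        ENNReal.div_self (by norm_num) (by norm_num)]
      exact (ENNReal.div_self (by norm_num) (by norm_num)).symm
    have := (MemLp.smul (r := 1) (hφ β) hconj :
      MemLp ((fun x => (starRingEnd ℂ) (φ α x)) • (φ β)) 1 (volume : Measure E3))
    rw [memLp_one_iff_integrable] at this
    exact this.congr (by filter_upwards with x; simp [smul_eq_mul])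
  have hWbdd : ∀ i j, ∃ D, ∀ x, ‖W i j x‖ ≤ D := by
    intro i j
    refine ⟨max (B ^ 2) (C ^ 2), fun x => ?_⟩
    by_cases hj : j = i
    · simp only [hWdef, hj, if_pos rfl]
      calc ‖((‖k x‖ : ℂ)) ^ 2‖ = ‖k x‖ ^ 2 := by
            rw [norm_pow, Complex.norm_real, Real.norm_eq_abs, abs_norm]
        _ ≤ C ^ 2 := by
            have := hC x
            have h0 : (0:ℝ) ≤ ‖k x‖ := norm_nonneg _
            nlinarith
        _ ≤ _ := le_max_right _ _
    · simp only [hWdef, if_neg hj]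
      calc ‖((‖h x‖ : ℂ)) ^ 2‖ = ‖h x‖ ^ 2 := by
            rw [norm_pow, Complex.norm_real, Real.norm_eq_abs, abs_norm]
        _ ≤ B ^ 2 := by
            have := hB x
            have h0 : (0:ℝ) ≤ ‖h x‖ := norm_nonneg _
            nlinarith
        _ ≤ _ := le_max_left _ _
  have hWmeas : ∀ i j, AEStronglyMeasurable (W i j) (volume : Measure E3) := by
    intro i j
    by_cases hj : j = i
    · simp only [hWdef, hj, if_pos rfl]
      exact ((Complex.measurable_ofReal.comp kmeas.norm).pow_const 2).aestronglyMeasurable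
    · simp only [hWdef, if_neg hj]
      exact ((Complex.measurable_ofReal.comp hmeas.norm).pow_const 2).aestronglyMeasurable
  have hint : ∀ i j α β,
      Integrable (fun x => (starRingEnd ℂ) (φ α x) * φ β x * W i j x)
        (volume : Measure E3) := by
    intro i j α β
    have := ((hmul α β).bdd_mul (hWmeas i j) (ae_of_all _ (hWbdd i j).choose_spec))
    exact this.congr (by filter_upwards with x; ring)
  have hval : ∀ i j α β,
      ∫ x : E3, (starRingEnd ℂ) (φ α x) * φ β x * W i j x
        = (if j = i then K else M) α β := by
    intro i j α β
    by_cases hj : j = i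
    · simp only [hWdef, if_pos hj]
      rw [hK α β]
      congr 1
      funext x
      push_cast
      ring
    · simp only [hWdef, if_neg hj]
      rw [hM α β]
      congr 1
      funext x
      push_cast
      ring
  -- the key per-i evaluation
  have key : ∀ i : Fin n,
      ((∫ X : Fin n → E3,
        (1 / (Nat.factorial n : ℝ)) *
          ‖Matrix.det (Matrix.of fun α j => φ α (X j))‖ ^ 2 *
          (∏ j ∈ Finset.univ.erase i, ‖h (X j)‖ ^ 2) * ‖k (X i)‖ ^ 2 : ℝ) : ℂ)
      = ((Nat.factorial n : ℂ))⁻¹ *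
          ∑ σ : Equiv.Perm (Fin n), ∑ τ : Equiv.Perm (Fin n),
            (((Equiv.Perm.sign σ : ℤ) : ℂ) * ((Equiv.Perm.sign τ : ℤ) : ℂ)) *
              ∏ j, (if j = i then K else M) (σ j) (τ j) := by
    intro i
    rw [show ((∫ X : Fin n → E3,
        (1 / (Nat.factorial n : ℝ)) *
          ‖Matrix.det (Matrix.of fun α j => φ α (X j))‖ ^ 2 *
          (∏ j ∈ Finset.univ.erase i, ‖h (X j)‖ ^ 2) * ‖k (X i)‖ ^ 2 : ℝ) : ℂ)
      = ∫ X : Fin n → E3,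
        (((1 / (Nat.factorial n : ℝ)) *
          ‖Matrix.det (Matrix.of fun α j => φ α (X j))‖ ^ 2 *
          (∏ j ∈ Finset.univ.erase i, ‖h (X j)‖ ^ 2) * ‖k (X i)‖ ^ 2 : ℝ) : ℂ)
      from (integral_ofReal (𝕜 := ℂ) (μ := volume) (f := fun X : Fin n → E3 =>
        (1 / (Nat.factorial n : ℝ)) *
          ‖Matrix.det (Matrix.of fun α j => φ α (X j))‖ ^ 2 *
          (∏ j ∈ Finset.univ.erase i, ‖h (X j)‖ ^ 2) * ‖k (X i)‖ ^ 2)).symm]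
    have hpt : ∀ X : Fin n → E3,
        (((1 / (Nat.factorial n : ℝ)) *
          ‖Matrix.det (Matrix.of fun α j => φ α (X j))‖ ^ 2 *
          (∏ j ∈ Finset.univ.erase i, ‖h (X j)‖ ^ 2) * ‖k (X i)‖ ^ 2 : ℝ) : ℂ)
        = ∑ p : Equiv.Perm (Fin n) × Equiv.Perm (Fin n),
            (((Nat.factorial n : ℂ))⁻¹ *
              (((Equiv.Perm.sign p.1 : ℤ) : ℂ) * ((Equiv.Perm.sign p.2 : ℤ) : ℂ))) *
              ∏ j, ((starRingEnd ℂ) (φ (p.1 j) (X j)) * φ (p.2 j) (X j) * W i j (X j)) := by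
      intro X
      set z : ℂ := Matrix.det (Matrix.of fun α j => φ α (X j)) with hz
      have hz2 : ((‖z‖ : ℂ)) ^ 2 = (starRingEnd ℂ) z * z := (RCLike.conj_mul z).symm
      have hzc : (starRingEnd ℂ) z =
          ∑ σ : Equiv.Perm (Fin n), ((Equiv.Perm.sign σ : ℤ) : ℂ) *
            ∏ j, (starRingEnd ℂ) (φ (σ j) (X j)) := by
        rw [hz, RingHom.map_det, Matrix.det_apply']
        rfl
      have hzz : z = ∑ τ : Equiv.Perm (Fin n), ((Equiv.Perm.sign τ : ℤ) : ℂ) *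
            ∏ j, φ (τ j) (X j) := by
        rw [hz, Matrix.det_apply']
        rfl
      have hw : (∏ j ∈ Finset.univ.erase i, ((‖h (X j)‖ : ℂ)) ^ 2) * ((‖k (X i)‖ : ℂ)) ^ 2
          = ∏ j, W i j (X j) := by
        rw [← Finset.mul_prod_erase Finset.univ (fun j => W i j (X j)) (Finset.mem_univ i),
          mul_comm]
        congr 1
        · simp [hWdef]
        · refine Finset.prod_congr rfl fun j hj => ?_
          have hne : j ≠ i := (Finset.mem_erase.mp hj).1
          simp [hWdef, hne]
      calc (((1 / (Nat.factorial n : ℝ)) *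
          ‖z‖ ^ 2 * (∏ j ∈ Finset.univ.erase i, ‖h (X j)‖ ^ 2) * ‖k (X i)‖ ^ 2 : ℝ) : ℂ)
          = ((Nat.factorial n : ℂ))⁻¹ * (((‖z‖ : ℂ)) ^ 2 *
              ((∏ j ∈ Finset.univ.erase i, ((‖h (X j)‖ : ℂ)) ^ 2) *
                ((‖k (X i)‖ : ℂ)) ^ 2)) := by
            push_cast
            ring
        _ = ((Nat.factorial n : ℂ))⁻¹ *
              ((∑ σ : Equiv.Perm (Fin n), ∑ τ : Equiv.Perm (Fin n),
                (((Equiv.Perm.sign σ : ℤ) : ℂ) * ((Equiv.Perm.sign τ : ℤ) : ℂ)) *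
                  ((∏ j, (starRingEnd ℂ) (φ (σ j) (X j))) * ∏ j, φ (τ j) (X j))) *
               ∏ j, W i j (X j)) := by
            rw [hz2, hzc, hzz, hw, Finset.sum_mul_sum]
            congr 1
            congr 1
            refine Finset.sum_congr rfl fun σ _ => ?_
            refine Finset.sum_congr rfl fun τ _ => ?_
            ring
        _ = ∑ p : Equiv.Perm (Fin n) × Equiv.Perm (Fin n),
            (((Nat.factorial n : ℂ))⁻¹ *
              (((Equiv.Perm.sign p.1 : ℤ) : ℂ) * ((Equiv.Perm.sign p.2 : ℤ) : ℂ))) *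
              ∏ j, ((starRingEnd ℂ) (φ (p.1 j) (X j)) * φ (p.2 j) (X j) * W i j (X j)) := by
            rw [Fintype.sum_prod_type, Finset.sum_mul, Finset.mul_sum]
            refine Finset.sum_congr rfl fun σ _ => ?_
            rw [Finset.sum_mul, Finset.mul_sum]
            refine Finset.sum_congr rfl fun τ _ => ?_
            dsimp only
            simp only [Finset.prod_mul_distrib]
            ring
    simp only [hpt]
    rw [integral_finset_sum]
    · rw [Fintype.sum_prod_type, Finset.mul_sum]
      refine Finset.sum_congr rfl fun σ _ => ?_
      rw [Finset.mul_sum]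
      refine Finset.sum_congr rfl fun τ _ => ?_
      dsimp only
      rw [MeasureTheory.integral_const_mul]
      rw [MeasureTheory.volume_pi]
      rw [MeasureTheory.integral_fintype_prod_eq_prod (ι := Fin n)
        (f := fun j x => (starRingEnd ℂ) (φ (σ j) x) * φ (τ j) x * W i j x)]
      simp only [hval]
      ring
    · intro p _
      exact (Integrable.fintype_prod
        (f := fun j x => (starRingEnd ℂ) (φ (p.1 j) x) * φ (p.2 j) x * W i j x)
        (fun j => hint i j (p.1 j) (p.2 j))).const_mul _
  -- assemble
  rw [Complex.ofReal_sum]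
  simp only [key]
  rw [← Finset.mul_sum]
  have halg : ∀ i : Fin n,
      (∑ σ : Equiv.Perm (Fin n), ∑ τ : Equiv.Perm (Fin n),
        (((Equiv.Perm.sign σ : ℤ) : ℂ) * ((Equiv.Perm.sign τ : ℤ) : ℂ)) *
          ∏ j, (if j = i then K else M) (σ j) (τ j))
      = ∑ τ : Equiv.Perm (Fin n), (M.updateCol (τ i) (fun α => K α (τ i))).det :=
    fun i => perm_sum_det n M K i
  simp only [halg]
  rw [Finset.sum_comm]
  have hrow : ∀ τ : Equiv.Perm (Fin n),
      ∑ i : Fin n, (M.updateCol (τ i) (fun α => K α (τ i))).det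
      = ∑ c : Fin n, (M.updateCol c (fun α => K α c)).det := fun τ =>
    Equiv.sum_comp τ (fun c => (M.updateCol c (fun α => K α c)).det)
  simp only [hrow, sum_updateColumn_det, Finset.sum_const, Finset.card_univ,
    Fintype.card_perm, Fintype.card_fin, nsmul_eq_mul]
  rw [← mul_assoc, inv_mul_cancel₀ (by exact_mod_cast Nat.factorial_ne_zero n), one_mul]
  rw [Matrix.inv_def, Matrix.mul_smul, Matrix.trace_smul, Matrix.trace_mul_comm]
  rw [smul_eq_mul, ← mul_assoc, Ring.mul_inverse_cancel _ hMinv, one_mul]
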